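/- If p is analytic on the open unit disk with p(0) = 1 and Re p(z) > α for all z in the unit disk, where 0 ≤ α < 1, then for |z| = r < 1 one has |z p'(z)/p(z)| ≤ 2r(1−α)/((1−r)(1 + (1−2α)r)). -/

import Mathlib

open Metric Complex

noncomputable def Complex.abs : AbsoluteValue ℂ ℝ :=
  IsAbsoluteValue.toAbsoluteValue (fun z : ℂ => ‖z‖)

@[simp] lemma Complex.abs_apply (z : ℂ) : Complex.abs z = ‖z‖ := rfl

lemma Complex.abs_conj (z : ℂ) : Complex.abs ((starRingEnd ℂ) z) = Complex.abs z := by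
  simp

lemma Complex.sq_abs (z : ℂ) : Complex.abs z ^ 2 = Complex.normSq z := Complex.sq_norm z

lemma Complex.abs_ofReal (x : ℝ) : Complex.abs (x : ℂ) = |x| := by simp

lemma Complex.abs_re_le_abs (z : ℂ) : |z.re| ≤ Complex.abs z := Complex.abs_re_le_norm z

lemma mob_den_ne {a w : ℂ} (ha : Complex.abs a < 1) (hw : Complex.abs w < 1) :
    1 - (starRingEnd ℂ) a * w ≠ 0 := by
  intro h
  have : (starRingEnd ℂ) a * w = 1 := by linear_combination -h
  have h2 := congrArg Complex.abs this
  simp only [map_mul, map_one, Complex.abs_conj] at h2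
  nlinarith [Complex.abs.nonneg a, Complex.abs.nonneg w]

lemma abs_lt_abs_of_normSq {u v : ℂ} (h : Complex.normSq u < Complex.normSq v) :
    Complex.abs u < Complex.abs v := by
  have := Complex.sq_abs u; have := Complex.sq_abs v
  nlinarith [Complex.abs.nonneg u, Complex.abs.nonneg v]

lemma mob_abs_lt {a w : ℂ} (ha : Complex.abs a < 1) (hw : Complex.abs w < 1) :
    Complex.abs ((a - w) / (1 - (starRingEnd ℂ) a * w)) < 1 := by
  rw [map_div₀, div_lt_one (AbsoluteValue.pos _ (mob_den_ne ha hw))]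
  have ha' : Complex.normSq a < 1 := by rw [← Complex.sq_abs]; nlinarith [Complex.abs.nonneg a]
  have hw' : Complex.normSq w < 1 := by rw [← Complex.sq_abs]; nlinarith [Complex.abs.nonneg w]
  apply abs_lt_abs_of_normSq
  have e1 := Complex.normSq_sub a w
  have e2 := Complex.normSq_sub 1 ((starRingEnd ℂ) a * w)
  have e3 : ((1:ℂ) * (starRingEnd ℂ) ((starRingEnd ℂ) a * w)).re = (a * (starRingEnd ℂ) w).re := by
    simp [mul_comm]
  rw [e1, e2, e3]
  simp only [Complex.normSq_one, Complex.normSq_mul, Complex.normSq_conj]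
  nlinarith [Complex.normSq_nonneg a, Complex.normSq_nonneg w]

lemma mob_hasDerivAt {a w : ℂ} (h : 1 - (starRingEnd ℂ) a * w ≠ 0) :
    HasDerivAt (fun x => (a - x) / (1 - (starRingEnd ℂ) a * x))
      (((Complex.normSq a : ℂ) - 1) / (1 - (starRingEnd ℂ) a * w) ^ 2) w := by
  have h1 : HasDerivAt (fun x : ℂ => a - x) (-1) w := by
    simpa using (hasDerivAt_id w).const_sub a
  have h2 : HasDerivAt (fun x : ℂ => 1 - (starRingEnd ℂ) a * x) (-((starRingEnd ℂ) a)) w := by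
    simpa using ((hasDerivAt_id w).const_mul ((starRingEnd ℂ) a)).const_sub 1
  have := h1.div h2 h
  refine this.congr_deriv ?_
  rw [← Complex.mul_conj]
  ring

lemma schwarz_pick {ψ : ℂ → ℂ} (hd : DifferentiableOn ℂ ψ (ball 0 1))
    (hb : ∀ w ∈ ball (0:ℂ) 1, Complex.abs (ψ w) ≤ 1) {a : ℂ} (ha : a ∈ ball (0:ℂ) 1) :
    Complex.abs (deriv ψ a) * (1 - Complex.abs a ^ 2) ≤ 1 - Complex.abs (ψ a) ^ 2 := by
  have haa : Complex.abs a < 1 := by simpa [mem_ball, dist_zero_right] using ha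
  have key : ∀ ε : ℝ, 0 < ε → ε < 1 →
      (1 - ε) * (Complex.abs (deriv ψ a) * (1 - Complex.abs a ^ 2)) ≤
        1 - (1 - ε) ^ 2 * Complex.abs (ψ a) ^ 2 := by
    intro ε hε0 hε1
    set k : ℂ := ((1 - ε : ℝ) : ℂ) with hk
    have habsk : Complex.abs k = 1 - ε := by
      rw [hk, Complex.abs_ofReal, abs_of_pos (by linarith)]
    set χ : ℂ → ℂ := fun w => k * ψ w with hχ
    set b : ℂ := k * ψ a with hbdef
    have hχlt : ∀ w ∈ ball (0:ℂ) 1, Complex.abs (χ w) < 1 := by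
      intro w hw
      have := hb w hw
      have : Complex.abs (χ w) ≤ 1 - ε := by
        rw [hχ]; simp only [map_mul, habsk]
        nlinarith [Complex.abs.nonneg (ψ w)]
      linarith
    have hblt : Complex.abs b < 1 := hχlt a ha
    set Ma : ℂ → ℂ := fun x => (a - x) / (1 - (starRingEnd ℂ) a * x) with hMa
    set Mb : ℂ → ℂ := fun x => (b - x) / (1 - (starRingEnd ℂ) b * x) with hMb
    set g : ℂ → ℂ := fun w => Mb (χ (Ma w)) with hg
    have hMa0 : Ma 0 = a := by simp [hMa]
    have hMbb : Mb b = 0 := by simp [hMb]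
    have hg0 : g 0 = 0 := by
      have h1 : χ (Ma 0) = b := by rw [hMa0]
      show Mb (χ (Ma 0)) = 0
      rw [h1, hMbb]
    have hmaps : Set.MapsTo g (ball (0:ℂ) 1) (ball (0:ℂ) 1) := by
      intro w hw
      have hw' : Complex.abs w < 1 := by simpa [mem_ball, dist_zero_right] using hw
      have h1 : Complex.abs (Ma w) < 1 := mob_abs_lt haa hw'
      have h2 : Complex.abs (χ (Ma w)) < 1 :=
        hχlt _ (by simpa [mem_ball, dist_zero_right] using h1)
      have h3 : Complex.abs (Mb (χ (Ma w))) < 1 := mob_abs_lt hblt h2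
      simpa [mem_ball, dist_zero_right, hg] using h3
    have hdiff : ∀ w ∈ ball (0:ℂ) 1, DifferentiableAt ℂ g w := by
      intro w hw
      have hw' : Complex.abs w < 1 := by simpa [mem_ball, dist_zero_right] using hw
      have h1 : Complex.abs (Ma w) < 1 := mob_abs_lt haa hw'
      have h1' : Ma w ∈ ball (0:ℂ) 1 := by simpa [mem_ball, dist_zero_right] using h1
      have h2 : Complex.abs (χ (Ma w)) < 1 := hχlt _ h1'
      have dMa : DifferentiableAt ℂ Ma w := (mob_hasDerivAt (mob_den_ne haa hw')).differentiableAt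
      have dχ : DifferentiableAt ℂ χ (Ma w) :=
        (hd.differentiableAt (isOpen_ball.mem_nhds h1')).const_mul k
      have dMb : DifferentiableAt ℂ Mb (χ (Ma w)) :=
        (mob_hasDerivAt (mob_den_ne hblt h2)).differentiableAt
      exact (dMb.comp (Ma w) dχ).comp w dMa
    -- derivative of g at 0
    have hdψ : HasDerivAt ψ (deriv ψ a) a :=
      (hd.differentiableAt (isOpen_ball.mem_nhds ha)).hasDerivAt
    have h₁ : HasDerivAt Ma ((Complex.normSq a : ℂ) - 1) 0 := by
      have := mob_hasDerivAt (a := a) (w := 0) (by simpa using mob_den_ne haa (by simp : Complex.abs (0:ℂ) < 1))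
      simpa using this
    have h₂ : HasDerivAt χ (k * deriv ψ a) a := hdψ.const_mul k
    have h₃ : HasDerivAt Mb (((Complex.normSq b : ℂ) - 1) / (1 - (starRingEnd ℂ) b * b) ^ 2) b :=
      mob_hasDerivAt (mob_den_ne hblt hblt)
    have h₂' : HasDerivAt χ (k * deriv ψ a) (Ma 0) := by rw [hMa0]; exact h₂
    have hcomp1 : HasDerivAt (fun w => χ (Ma w)) ((k * deriv ψ a) * ((Complex.normSq a : ℂ) - 1)) 0 :=
      h₂'.comp 0 h₁
    have hvals : χ (Ma 0) = b := by rw [hMa0]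
    have h₃' : HasDerivAt Mb (((Complex.normSq b : ℂ) - 1) / (1 - (starRingEnd ℂ) b * b) ^ 2)
        (χ (Ma 0)) := by rw [hvals]; exact h₃
    have hgD : HasDerivAt g
        ((((Complex.normSq b : ℂ) - 1) / (1 - (starRingEnd ℂ) b * b) ^ 2) *
          ((k * deriv ψ a) * ((Complex.normSq a : ℂ) - 1))) 0 := by
        have := h₃'.comp 0 hcomp1; exact this
    have habs1 : Complex.abs (deriv g 0) ≤ 1 := by
      have := Complex.norm_deriv_le_one_of_mapsTo_ball (f := g) (c := 0) (R := 1)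
        (fun w hw => (hdiff w hw).differentiableWithinAt)
        (by rw [hg0]; exact hmaps.mono_right ball_subset_closedBall) one_pos
      simpa using this
    rw [hgD.deriv] at habs1
    -- compute the absolute value
    have hnb : Complex.normSq b < 1 := by
      rw [← Complex.sq_abs]; nlinarith [Complex.abs.nonneg b]
    have hden : (1 : ℂ) - (starRingEnd ℂ) b * b = ((1 - Complex.normSq b : ℝ) : ℂ) := by
      rw [mul_comm, Complex.mul_conj]; push_cast; ring
    rw [hden] at habs1
    simp only [map_mul, map_div₀, map_pow, Complex.abs_ofReal, habsk] at habs1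
    have e1 : Complex.abs ((Complex.normSq b : ℂ) - 1) = 1 - Complex.normSq b := by
      rw [show ((Complex.normSq b : ℂ) - 1) = ((Complex.normSq b - 1 : ℝ) : ℂ) by push_cast; ring,
        Complex.abs_ofReal, abs_of_nonpos (by linarith)]
      ring
    have e2 : Complex.abs ((Complex.normSq a : ℂ) - 1) = 1 - Complex.normSq a := by
      have hna : Complex.normSq a < 1 := by
        rw [← Complex.sq_abs]; nlinarith [Complex.abs.nonneg a]
      rw [show ((Complex.normSq a : ℂ) - 1) = ((Complex.normSq a - 1 : ℝ) : ℂ) by push_cast; ring,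
        Complex.abs_ofReal, abs_of_nonpos (by linarith)]
      ring
    rw [e1, e2] at habs1
    rw [_root_.abs_of_nonneg (by linarith : (0:ℝ) ≤ 1 - Complex.normSq b)] at habs1
    have ht : (0:ℝ) < 1 - Complex.normSq b := by linarith
    have e3 : (1 - Complex.normSq b) / (1 - Complex.normSq b)^2 *
        ((1 - ε) * Complex.abs (deriv ψ a) * (1 - Complex.normSq a))
        = ((1 - ε) * Complex.abs (deriv ψ a) * (1 - Complex.normSq a)) / (1 - Complex.normSq b) := by
      field_simp
    rw [e3, div_le_one ht] at habs1
    have hbsq : Complex.normSq b = (1 - ε) ^ 2 * Complex.abs (ψ a) ^ 2 := by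
      rw [← Complex.sq_abs, hbdef, map_mul, habsk, mul_pow]
    have hasq : Complex.normSq a = Complex.abs a ^ 2 := (Complex.sq_abs a).symm
    rw [hasq, hbsq] at habs1
    ring_nf at habs1 ⊢
    linarith
  -- limit ε → 0⁺
  have htend : Filter.Tendsto
      (fun ε : ℝ => (1 - (1 - ε) ^ 2 * Complex.abs (ψ a) ^ 2) -
        (1 - ε) * (Complex.abs (deriv ψ a) * (1 - Complex.abs a ^ 2)))
      (nhdsWithin 0 (Set.Ioi 0))
      (nhds ((1 - Complex.abs (ψ a) ^ 2) -
        Complex.abs (deriv ψ a) * (1 - Complex.abs a ^ 2))) := by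
    have : Continuous (fun ε : ℝ => (1 - (1 - ε) ^ 2 * Complex.abs (ψ a) ^ 2) -
        (1 - ε) * (Complex.abs (deriv ψ a) * (1 - Complex.abs a ^ 2))) := by continuity
    have ht := this.tendsto 0
    simp only [sub_zero, one_pow, one_mul] at ht
    exact ht.mono_left nhdsWithin_le_nhds
  have hev : ∀ᶠ ε in nhdsWithin (0:ℝ) (Set.Ioi 0),
      0 ≤ (1 - (1 - ε) ^ 2 * Complex.abs (ψ a) ^ 2) -
        (1 - ε) * (Complex.abs (deriv ψ a) * (1 - Complex.abs a ^ 2)) := by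
    filter_upwards [Ioo_mem_nhdsGT_of_mem (Set.mem_Ico.mpr ⟨le_refl (0:ℝ), one_pos⟩)] with ε hε
    have := key ε hε.1 hε.2
    linarith
  have := ge_of_tendsto htend hev
  linarith

lemma denom_bound (c : ℝ) (hc1 : -1 < c) (hc2 : c ≤ 1) (F : ℂ) (hF : Complex.abs F < 1) :
    (1 - Complex.abs F) * (1 + c * Complex.abs F) ≤
      Complex.abs (1 + F) * Complex.abs (1 - (c:ℂ) * F) := by
  set ρ := Complex.abs F with hρ
  set t := F.re with ht
  have hρ0 : 0 ≤ ρ := Complex.abs.nonneg F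
  have htρ : |t| ≤ ρ := Complex.abs_re_le_abs F
  have ht1 : t ≤ ρ := le_of_abs_le htρ
  have ht2 : -ρ ≤ t := neg_le_of_abs_le htρ
  have hsq : t^2 + F.im^2 = ρ^2 := by
    rw [hρ, Complex.sq_abs]; simp [Complex.normSq_apply, ht]; ring
  have hn1 : Complex.normSq (1 + F) = 1 + 2*t + ρ^2 := by
    simp [Complex.normSq_apply, Complex.add_re, Complex.add_im]
    nlinarith [hsq]
  have hn2 : Complex.normSq (1 - (c:ℂ) * F) = 1 - 2*c*t + c^2*ρ^2 := by
    simp [Complex.normSq_apply, Complex.sub_re, Complex.sub_im, Complex.mul_re, Complex.mul_im]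
    nlinarith [hsq]
  have hcρ : (0:ℝ) ≤ 1 - c*ρ^2 := by
    nlinarith [mul_nonneg (by linarith : (0:ℝ) ≤ 1-c) (sq_nonneg ρ)]
  have hb0 : 0 ≤ (1 - ρ) * (1 + c * ρ) := by
    nlinarith [mul_nonneg (by linarith : (0:ℝ) ≤ 1-ρ)
      (mul_nonneg (by linarith : (0:ℝ) ≤ 1+c) hρ0), sq_nonneg (1-ρ)]
  have hbr : 0 ≤ (1-c)*(1-c*ρ^2) + 2*c*(ρ-t) := by
    rcases le_or_gt 0 c with hc | hc
    · nlinarith [mul_nonneg (by linarith : (0:ℝ) ≤ 1-c) hcρ,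
        mul_nonneg hc (by linarith : (0:ℝ) ≤ ρ-t)]
    · nlinarith [sq_nonneg (1 + c*ρ), sq_nonneg (1 - ρ),
        mul_nonneg (by linarith : (0:ℝ) ≤ -c) (sq_nonneg (1-ρ)),
        mul_nonneg (by linarith : (0:ℝ) ≤ -c) (by linarith : (0:ℝ) ≤ ρ+t)]
  have hprod : (1+2*t+ρ^2)*(1-2*c*t+c^2*ρ^2) ≥ ((1-ρ)*(1+c*ρ))^2 := by
    nlinarith [mul_nonneg (by linarith : (0:ℝ) ≤ t + ρ) hbr]
  have ha1 : 0 ≤ Complex.abs (1 + F) * Complex.abs (1 - (c:ℂ) * F) :=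
    mul_nonneg (Complex.abs.nonneg _) (Complex.abs.nonneg _)
  have hsqeq : (Complex.abs (1 + F) * Complex.abs (1 - (c:ℂ) * F))^2
      = (1+2*t+ρ^2)*(1-2*c*t+c^2*ρ^2) := by
    rw [mul_pow, Complex.sq_abs, Complex.sq_abs, hn1, hn2]
  nlinarith [hprod, hsqeq, ha1, hb0]

lemma endgame (α r s d : ℝ) (hα0 : 0 ≤ α) (hα1 : α < 1) (hr0 : 0 < r) (hr1 : r < 1)
    (hs0 : 0 ≤ s) (hs1 : s ≤ 1) (hd0 : 0 ≤ d) (hSP : d * (1 - r^2) ≤ 1 - s^2) :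
    (2-2*α) * (r * (s + r*d)) / ((1-r*s)*(1+(1-2*α)*(r*s))) ≤
      2*r*(1-α)/((1-r)*(1+(1-2*α)*r)) := by
  set c := 1 - 2*α with hc
  have hc1 : -1 < c := by rw [hc]; linarith
  have hc2 : c ≤ 1 := by rw [hc]; linarith
  have hrs1 : r*s < 1 := by nlinarith
  have hrs0 : 0 ≤ r*s := mul_nonneg hr0.le hs0
  have h1crs : 0 < 1 + c*(r*s) := by
    nlinarith [mul_nonneg (by linarith : (0:ℝ) ≤ 1+c) hrs0]
  have hden1 : 0 < (1-r*s)*(1+c*(r*s)) := mul_pos (by linarith) h1crs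
  have h1cr : 0 < 1 + c*r := by
    nlinarith [mul_nonneg (by linarith : (0:ℝ) ≤ 1+c) hr0.le]
  have hden2 : 0 < (1-r)*(1+c*r) := mul_pos (by linarith) h1cr
  rw [div_le_div_iff₀ hden1 hden2]
  have hkey : (2-2*α) * (r * (s + r*d)) * ((1-r)*(1+c*r)) * (1+r) ≤
      2*r*(1-α)*((1-r*s)*(1+c*(r*s))) * (1+r) := by
    nlinarith [mul_nonneg (mul_nonneg hr0.le (by linarith : (0:ℝ) ≤ 1-α))
        (mul_nonneg (mul_nonneg (by nlinarith : (0:ℝ) ≤ 1-r*s) (by linarith : (0:ℝ) ≤ 1-s))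
          (by nlinarith : (0:ℝ) ≤ 1-c*r^2)),
      mul_nonneg (mul_nonneg hr0.le (by linarith : (0:ℝ) ≤ 1-α))
        (mul_nonneg (mul_nonneg (by nlinarith : (0:ℝ) ≤ 1+c*r) hr0.le)
          (by nlinarith : (0:ℝ) ≤ (1-s^2) - d*(1-r^2)))]
  have h1r : (0:ℝ) < 1 + r := by linarith
  calc (2-2*α) * (r * (s + r*d)) * ((1-r)*(1+c*r))
      ≤ 2*r*(1-α)*((1-r*s)*(1+c*(r*s))) := le_of_mul_le_mul_right (by linarith [hkey]) h1r

theorem positive_real_part_log_deriv_bound (α : ℝ) (hα0 : 0 ≤ α) (hα1 : α < 1)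
    (p : ℂ → ℂ) (hp : DifferentiableOn ℂ p (ball (0 : ℂ) 1))
    (hp0 : p 0 = 1) (hre : ∀ z ∈ ball (0 : ℂ) 1, α < (p z).re)
    (z : ℂ) (r : ℝ) (hz : ‖z‖ = r) (hr : r < 1) :
    ‖z * deriv p z / p z‖ ≤
      2 * r * (1 - α) / ((1 - r) * (1 + (1 - 2 * α) * r)) := by
  simp only [← Complex.abs_apply] at hz ⊢
  by_cases hz0 : z = 0
  · have hr' : r = 0 := by rw [← hz, hz0]; simp
    subst hz0 hr'
    simp
  have hr0 : 0 < r := by rw [← hz]; exact Complex.abs.pos hz0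
  have hz1 : z ∈ ball (0:ℂ) 1 := by
    rw [mem_ball_zero_iff]
    show Complex.abs z < 1
    rw [hz]; exact hr
  set γ : ℂ := ((1 - 2*α : ℝ) : ℂ) with hγ
  have hpne : ∀ w ∈ ball (0:ℂ) 1, p w ≠ 0 := by
    intro w hw h
    have := hre w hw
    rw [h] at this; simp at this; linarith
  have hpγ : ∀ w ∈ ball (0:ℂ) 1, p w + γ ≠ 0 := by
    intro w hw h
    have h1 := hre w hw
    have h2 : (p w + γ).re = (p w).re + (1 - 2*α) := by
      simp [hγ, Complex.add_re, Complex.ofReal_re]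
    rw [h] at h2; simp at h2; linarith
  set φ : ℂ → ℂ := fun w => (1 - p w) / (p w + γ) with hφ
  have hφd : DifferentiableOn ℂ φ (ball 0 1) :=
    ((differentiableOn_const 1).sub hp).div (hp.add_const γ) hpγ
  have hφ0 : φ 0 = 0 := by simp [hφ, hp0]
  have hφlt : ∀ w ∈ ball (0:ℂ) 1, Complex.abs (φ w) < 1 := by
    intro w hw
    rw [hφ]
    simp only [map_div₀]
    rw [div_lt_one (Complex.abs.pos (hpγ w hw))]
    apply abs_lt_abs_of_normSq
    have h1 := hre w hw
    simp only [Complex.normSq_apply, Complex.sub_re, Complex.sub_im, Complex.add_re,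
      Complex.add_im, Complex.one_re, Complex.one_im, hγ, Complex.ofReal_re, Complex.ofReal_im]
    nlinarith [sq_nonneg ((p w).re - α)]
  set ψ : ℂ → ℂ := dslope φ 0 with hψ
  have hψd : DifferentiableOn ℂ ψ (ball 0 1) :=
    (differentiableOn_dslope (isOpen_ball.mem_nhds (mem_ball_self one_pos))).mpr hφd
  have hmapsφ : Set.MapsTo φ (ball (0:ℂ) 1) (ball (φ 0) 1) := by
    intro w hw
    rw [hφ0, mem_ball_zero_iff]
    exact hφlt w hw
  have hψle : ∀ w ∈ ball (0:ℂ) 1, Complex.abs (ψ w) ≤ 1 := by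
    intro w hw
    have := Complex.norm_dslope_le_div_of_mapsTo_ball hφd (hmapsφ.mono_right ball_subset_closedBall) hw
    simpa using this
  have hφψ : ∀ w : ℂ, φ w = w * ψ w := by
    intro w
    have h := sub_smul_dslope φ 0 w
    rw [sub_zero, hφ0, sub_zero, smul_eq_mul] at h
    exact h.symm
  -- abbreviations at z
  set s := Complex.abs (ψ z) with hs
  set d := Complex.abs (deriv ψ z) with hd
  have hs1 : s ≤ 1 := hψle z hz1
  have hs0 : 0 ≤ s := Complex.abs.nonneg _
  have hd0 : 0 ≤ d := Complex.abs.nonneg _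
  have hSP : d * (1 - r^2) ≤ 1 - s^2 := by
    have := schwarz_pick hψd hψle hz1
    rw [hz] at this
    exact this
  -- derivative of φ at z, two ways
  have hψz : DifferentiableAt ℂ ψ z := hψd.differentiableAt (isOpen_ball.mem_nhds hz1)
  have hprod : HasDerivAt φ (ψ z + z * deriv ψ z) z := by
    have h := (hasDerivAt_id z).mul hψz.hasDerivAt
    have heq : φ = fun w => w * ψ w := funext hφψ
    rw [heq]
    exact h.congr_deriv (by simp)
  have hpz : HasDerivAt p (deriv p z) z :=
    (hp.differentiableAt (isOpen_ball.mem_nhds hz1)).hasDerivAt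
  have hquot : HasDerivAt φ
      ((-(deriv p z) * (p z + γ) - (1 - p z) * deriv p z) / (p z + γ)^2) z := by
    have h1 : HasDerivAt (fun w => 1 - p w) (-(deriv p z)) z := by
      simpa using hpz.const_sub 1
    have h2 : HasDerivAt (fun w => p w + γ) (deriv p z) z := hpz.add_const γ
    exact h1.div h2 (hpγ z hz1)
  have huniq : (-(deriv p z) * (p z + γ) - (1 - p z) * deriv p z) / (p z + γ)^2
      = ψ z + z * deriv ψ z := hquot.unique hprod
  -- the key identity
  have h1γ : (1:ℂ) + γ ≠ 0 := by
    intro h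
    have : ((1:ℂ) + γ).re = 0 := by rw [h]; simp
    simp [hγ, Complex.add_re, Complex.ofReal_re] at this
    linarith
  have hPz : p z ≠ 0 := hpne z hz1
  have hPγ : p z + γ ≠ 0 := hpγ z hz1
  have hP' : deriv p z = -(ψ z + z * deriv ψ z) * (p z + γ)^2 / (1 + γ) := by
    field_simp at huniq ⊢
    linear_combination (-(1:ℂ)) * huniq
  have hFval : φ z = (1 - p z) / (p z + γ) := rfl
  have h1F : 1 + φ z = (1 + γ) / (p z + γ) := by
    rw [hFval]; field_simp; ring
  have h2F : 1 - γ * φ z = p z * (1 + γ) / (p z + γ) := by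
    rw [hFval]; field_simp; ring
  have h1Fne : 1 + φ z ≠ 0 := by
    rw [h1F]; exact div_ne_zero h1γ hPγ
  have h2Fne : 1 - γ * φ z ≠ 0 := by
    rw [h2F]; exact div_ne_zero (mul_ne_zero hPz h1γ) hPγ
  have hid : z * deriv p z / p z
      = -((1 + γ) * (z * (ψ z + z * deriv ψ z)) / ((1 + φ z) * (1 - γ * φ z))) := by
    rw [hP', h1F, h2F]
    field_simp
  -- take absolute values
  rw [hid, map_neg_eq_map, map_div₀, map_mul, map_mul, map_mul]
  have habs1γ : Complex.abs (1 + γ) = 2 - 2*α := by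
    rw [show (1:ℂ) + γ = ((2 - 2*α : ℝ):ℂ) by rw [hγ]; push_cast; ring, Complex.abs_ofReal,
      abs_of_pos (by linarith)]
  have habsE : Complex.abs (ψ z + z * deriv ψ z) ≤ s + r * d := by
    calc Complex.abs (ψ z + z * deriv ψ z)
        ≤ Complex.abs (ψ z) + Complex.abs (z * deriv ψ z) := Complex.abs.add_le _ _
      _ = s + r * d := by rw [map_mul, hz, ← hs, ← hd]
  have habsF : Complex.abs (φ z) = r * s := by
    rw [hφψ z, map_mul, hz, ← hs]
  have hrs1 : r * s < 1 := by nlinarith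
  have hc1 : -1 < 1 - 2*α := by linarith
  have hc2 : 1 - 2*α ≤ 1 := by linarith
  have hdenb : (1 - r*s) * (1 + (1-2*α)*(r*s)) ≤
      Complex.abs (1 + φ z) * Complex.abs (1 - γ * φ z) := by
    have := denom_bound (1-2*α) hc1 hc2 (φ z) (by rw [habsF]; exact hrs1)
    rw [habsF] at this
    exact this
  have hdenpos : 0 < (1 - r*s) * (1 + (1-2*α)*(r*s)) := by
    have h1crs : 0 < 1 + (1-2*α)*(r*s) := by
      nlinarith [mul_nonneg (by linarith : (0:ℝ) ≤ 2-2*α) (mul_nonneg hr0.le hs0)]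
    exact mul_pos (by linarith) h1crs
  calc Complex.abs (1 + γ) * (Complex.abs z * Complex.abs (ψ z + z * deriv ψ z)) /
        (Complex.abs (1 + φ z) * Complex.abs (1 - γ * φ z))
      ≤ (2-2*α) * (r * (s + r*d)) / ((1-r*s)*(1+(1-2*α)*(r*s))) := by
        apply div_le_div₀ (mul_nonneg (by linarith : (0:ℝ) ≤ 2-2*α)
          (mul_nonneg hr0.le (add_nonneg hs0 (mul_nonneg hr0.le hd0)))) _ hdenpos hdenb
        rw [habs1γ, hz]
        exact mul_le_mul_of_nonneg_left
          (mul_le_mul_of_nonneg_left habsE hr0.le) (by linarith : (0:ℝ) ≤ 2-2*α)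
    _ ≤ 2*r*(1-α)/((1-r)*(1+(1-2*α)*r)) :=
        endgame α r s d hα0 hα1 hr0 hr hs0 hs1 hd0 hSP
    _ = 2 * r * (1 - α) / ((1 - r) * (1 + (1 - 2 * α) * r)) := by ring_nf
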